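/- arXiv:1809.10193 — 5 statements merged into one kernel-verified Lean document; each statement's English description precedes it below -/
import Mathlib

section
/- The classical Sharpe ratio S(X) = E[X]/√(Var X) is not monotone: there exist random variables X, Y with Y ≤ X almost surely but S(Y) > S(X). In particular, if X is standard normal plus 1 (mean 1, variance 1) and Y = min(X, 1), then S(X) = 1 while S(Y) > 1. -/
open MeasureTheory ProbabilityTheory

open Real Set Filter Topology
open scoped NNReal ENNReal

noncomputable def gam : Measure ℝ := gaussianReal 0 1
instance : IsProbabilityMeasure gam := inferInstanceAs (IsProbabilityMeasure (gaussianReal 0 1))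

lemma lemA : Integrable (fun x : ℝ => Real.exp (-(1/2) * x^2)) :=
  integrable_exp_neg_mul_sq (by norm_num)

lemma lemB : Integrable (fun x : ℝ => x * Real.exp (-(1/2) * x^2)) :=
  integrable_mul_exp_neg_mul_sq (by norm_num)

lemma lemC : Integrable (fun x : ℝ => x^2 * Real.exp (-(1/2) * x^2)) := by
  have h := integrable_rpow_mul_exp_neg_mul_sq (b := 1/2) (by norm_num) (s := 2) (by norm_num)
  refine h.congr (Filter.Eventually.of_forall fun x => ?_)
  have : x ^ (2:ℝ) = x ^ (2:ℕ) := by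
    rw [show ((2:ℝ) = ((2:ℕ):ℝ)) by norm_num, Real.rpow_natCast]
  simp only [this]

lemma deriv_exp_sq (x : ℝ) :
    HasDerivAt (fun y : ℝ => -Real.exp (-(1/2) * y^2)) (x * Real.exp (-(1/2) * x^2)) x := by
  have h1 : HasDerivAt (fun y : ℝ => -(1/2) * y^2) (-(1/2) * (2*x)) x := by
    simpa using ((hasDerivAt_pow 2 x).const_mul (-(1/2):ℝ))
  have h2 : HasDerivAt (fun y : ℝ => -Real.exp (-(1/2) * y^2))
      (-(Real.exp (-(1/2) * x^2) * (-(1/2) * (2*x)))) x := (h1.exp).neg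
  convert h2 using 1
  ring

lemma tendsto_exp_sq : Tendsto (fun y : ℝ => -Real.exp (-(1/2) * y^2)) atTop (nhds 0) := by
  rw [show (0:ℝ) = -0 by ring]
  apply Tendsto.neg
  apply Real.tendsto_exp_atBot.comp
  have : Tendsto (fun y : ℝ => y^2) atTop atTop := tendsto_pow_atTop (by norm_num)
  have h := this.const_mul_atTop_of_neg (show (-(1/2):ℝ) < 0 by norm_num)
  exact h

lemma L1 : ∫ x in Ioi (0:ℝ), x * Real.exp (-(1/2) * x^2) = 1 := by
  have h := integral_Ioi_of_hasDerivAt_of_tendsto' (a := 0)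
    (f := fun y : ℝ => -Real.exp (-(1/2) * y^2))
    (f' := fun x : ℝ => x * Real.exp (-(1/2) * x^2))
    (fun x _ => deriv_exp_sq x) lemB.integrableOn tendsto_exp_sq
  simpa using h

lemma deriv2 (x : ℝ) :
    HasDerivAt (fun y : ℝ => -y * Real.exp (-(1/2) * y^2))
      (x^2 * Real.exp (-(1/2) * x^2) - Real.exp (-(1/2) * x^2)) x := by
  have h1 : HasDerivAt (fun y : ℝ => -(1/2) * y^2) (-(1/2) * (2*x)) x := by
    simpa using ((hasDerivAt_pow 2 x).const_mul (-(1/2):ℝ))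
  have h2 : HasDerivAt (fun y : ℝ => Real.exp (-(1/2) * y^2))
      (Real.exp (-(1/2) * x^2) * (-(1/2) * (2*x))) x := h1.exp
  have h3 : HasDerivAt (fun y : ℝ => -y * Real.exp (-(1/2) * y^2))
      (-1 * Real.exp (-(1/2) * x^2) + -(id x) * (Real.exp (-(1/2) * x^2) * (-(1/2) * (2*x)))) x :=
    ((hasDerivAt_id x).neg).mul h2
  convert h3 using 1
  simp only [id]
  ring

lemma tendsto2 : Tendsto (fun y : ℝ => -y * Real.exp (-(1/2) * y^2)) atTop (nhds 0) := by
  have hlo := rpow_mul_exp_neg_mul_sq_isLittleO_exp_neg (b := 1/2) (by norm_num) 1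
  have hexp : Tendsto (fun x : ℝ => Real.exp (-(1/2) * x)) atTop (nhds 0) := by
    apply Real.tendsto_exp_atBot.comp
    exact tendsto_id.const_mul_atTop_of_neg (show (-(1/2):ℝ) < 0 by norm_num)
  have h0 : Tendsto (fun y : ℝ => y ^ (1:ℝ) * Real.exp (-(1/2) * y^2)) atTop (nhds 0) :=
    hlo.tendsto_zero_of_tendsto hexp
  have h0' : Tendsto (fun y : ℝ => y * Real.exp (-(1/2) * y^2)) atTop (nhds 0) := by
    refine h0.congr' ?_
    filter_upwards [eventually_ge_atTop (0:ℝ)] with y _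
    rw [Real.rpow_one]
  simpa using h0'.neg

lemma L2 : ∫ x in Ioi (0:ℝ), x^2 * Real.exp (-(1/2) * x^2) = Real.sqrt (2*π) / 2 := by
  have h := integral_Ioi_of_hasDerivAt_of_tendsto' (a := 0)
    (f := fun y : ℝ => -y * Real.exp (-(1/2) * y^2))
    (f' := fun x : ℝ => x^2 * Real.exp (-(1/2) * x^2) - Real.exp (-(1/2) * x^2))
    (fun x _ => deriv2 x) (lemC.sub lemA).integrableOn tendsto2
  have h0 : (∫ x in Ioi (0:ℝ), (x^2 * Real.exp (-(1/2) * x^2) - Real.exp (-(1/2) * x^2))) = 0 := by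
    simpa using h
  have hsub := integral_sub (lemC.integrableOn (s := Ioi 0)) (lemA.integrableOn (s := Ioi 0))
  have hA : ∫ x in Ioi (0:ℝ), Real.exp (-(1/2) * x^2) = Real.sqrt (2*π) / 2 := by
    have := integral_gaussian_Ioi (1/2)
    rw [show π / (1/2) = 2*π by ring] at this
    simpa using this
  have := h0
  rw [hsub] at this
  linarith [hA, this]

lemma pdf_eq (x : ℝ) : gaussianPDFReal 0 1 x = (Real.sqrt (2*π))⁻¹ * Real.exp (-(1/2) * x^2) := by
  simp only [gaussianPDFReal, NNReal.coe_one, mul_one, sub_zero]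
  congr 1
  ring

lemma abs_max_le (x : ℝ) : |max x 0| ≤ |x| := by
  rcases le_total x 0 with h | h
  · rw [max_eq_right h]; simp [abs_nonneg]
  · rw [max_eq_left h]

lemma abs_min_le (x : ℝ) : |min x 0| ≤ |x| := by
  rcases le_total x 0 with h | h
  · rw [min_eq_left h]
  · rw [min_eq_right h]; simp [abs_nonneg]

lemma gam_withDensity :
    gam = (volume : Measure ℝ).withDensity
      fun x => (((gaussianPDFReal 0 1 x).toNNReal : ℝ≥0) : ℝ≥0∞) := by
  rw [gam, gaussianReal_of_var_ne_zero 0 one_ne_zero]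
  rfl

lemma integral_gam (g : ℝ → ℝ) :
    ∫ x, g x ∂gam = ∫ x, gaussianPDFReal 0 1 x * g x := by
  rw [gam_withDensity, integral_withDensity_eq_integral_smul
    ((measurable_gaussianPDFReal 0 1).real_toNNReal) g]
  congr 1
  ext x
  rw [NNReal.smul_def, smul_eq_mul, Real.coe_toNNReal _ (gaussianPDFReal_nonneg 0 1 x)]

lemma integrable_gam_iff (g : ℝ → ℝ) :
    Integrable g gam ↔ Integrable (fun x => gaussianPDFReal 0 1 x * g x) := by
  rw [gam_withDensity, integrable_withDensity_iff_integrable_smul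
    ((measurable_gaussianPDFReal 0 1).real_toNNReal)]
  constructor <;> intro h <;> refine h.congr (Filter.Eventually.of_forall fun x => ?_) <;>
    simp only [NNReal.smul_def, smul_eq_mul,
      Real.coe_toNNReal _ (gaussianPDFReal_nonneg 0 1 x)]

lemma hIntId : Integrable (fun x : ℝ => x) gam := by
  rw [integrable_gam_iff]
  refine (lemB.const_mul ((Real.sqrt (2*π))⁻¹)).congr (Filter.Eventually.of_forall fun x => ?_)
  simp only [pdf_eq]; ring

lemma hIntSq : Integrable (fun x : ℝ => x^2) gam := by
  rw [integrable_gam_iff]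
  refine (lemC.const_mul ((Real.sqrt (2*π))⁻¹)).congr (Filter.Eventually.of_forall fun x => ?_)
  simp only [pdf_eq]; ring

lemma hIntMax : Integrable (fun x : ℝ => max x 0) gam :=
  hIntId.mono (continuous_id.max continuous_const).aestronglyMeasurable
    (Filter.Eventually.of_forall fun x => by
      simpa only [Real.norm_eq_abs] using abs_max_le x)

lemma hIntMin : Integrable (fun x : ℝ => min x 0) gam :=
  hIntId.mono (continuous_id.min continuous_const).aestronglyMeasurable
    (Filter.Eventually.of_forall fun x => by
      simpa only [Real.norm_eq_abs] using abs_min_le x)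

lemma hIntMaxSq : Integrable (fun x : ℝ => (max x 0)^2) gam :=
  hIntSq.mono ((continuous_id.max continuous_const).pow 2).aestronglyMeasurable
    (Filter.Eventually.of_forall fun x => by
      simp only [Real.norm_eq_abs, abs_pow]
      exact pow_le_pow_left₀ (abs_nonneg _) (abs_max_le x) 2)

lemma hIntMinSq : Integrable (fun x : ℝ => (min x 0)^2) gam :=
  hIntSq.mono ((continuous_id.min continuous_const).pow 2).aestronglyMeasurable
    (Filter.Eventually.of_forall fun x => by
      simp only [Real.norm_eq_abs, abs_pow]
      exact pow_le_pow_left₀ (abs_nonneg _) (abs_min_le x) 2)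

lemma c1 : ∫ x, max x 0 ∂gam = (Real.sqrt (2*π))⁻¹ := by
  rw [integral_gam]
  rw [← setIntegral_eq_integral_of_forall_compl_eq_zero (s := Ioi 0)
    (f := fun x => gaussianPDFReal 0 1 x * max x 0)
    (fun x hx => by simp only [max_eq_right (by simpa using hx : x ≤ 0), mul_zero])]
  rw [setIntegral_congr_fun measurableSet_Ioi
    (g := fun x => (Real.sqrt (2*π))⁻¹ * (x * Real.exp (-(1/2) * x^2)))
    (fun x hx => by simp only [pdf_eq, max_eq_left (le_of_lt (mem_Ioi.mp hx))]; ring)]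
  rw [integral_const_mul, L1, mul_one]

lemma q1 : ∫ x, (max x 0)^2 ∂gam = 1/2 := by
  rw [integral_gam]
  rw [← setIntegral_eq_integral_of_forall_compl_eq_zero (s := Ioi 0)
    (f := fun x => gaussianPDFReal 0 1 x * (max x 0)^2)
    (fun x hx => by simp only [max_eq_right (by simpa using hx : x ≤ 0)]; ring)]
  rw [setIntegral_congr_fun measurableSet_Ioi
    (g := fun x => (Real.sqrt (2*π))⁻¹ * (x^2 * Real.exp (-(1/2) * x^2)))
    (fun x hx => by simp only [pdf_eq, max_eq_left (le_of_lt (mem_Ioi.mp hx))]; ring)]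
  rw [integral_const_mul, L2]
  rw [show ((Real.sqrt (2*π))⁻¹ * (Real.sqrt (2*π) / 2) : ℝ)
      = (Real.sqrt (2*π))⁻¹ * Real.sqrt (2*π) / 2 by ring,
    inv_mul_cancel₀ (by positivity : Real.sqrt (2*π) ≠ 0)]

lemma hmapneg : Measure.map (fun x : ℝ => -x) gam = gam := by
  have h := gaussianReal_map_const_mul (μ := 0) (v := 1) (-1)
  rw [show (fun x : ℝ => (-1) * x) = fun x : ℝ => -x from funext fun x => by ring] at h
  rw [gam]
  convert h using 2
  · norm_num
  · ext : 1
    push_cast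
    norm_num

lemma int_neg_comp (g : ℝ → ℝ) (hg : Continuous g) :
    ∫ x, g x ∂gam = ∫ x, g (-x) ∂gam := by
  conv_lhs => rw [← hmapneg]
  rw [integral_map measurable_neg.aemeasurable hg.aestronglyMeasurable]

lemma m1 : ∫ x, min x 0 ∂gam = -(Real.sqrt (2*π))⁻¹ := by
  rw [int_neg_comp (fun x => min x 0) (continuous_id.min continuous_const)]
  have : (fun x : ℝ => min (-x) 0) = fun x : ℝ => -(max x 0) := by
    funext x
    rw [show (0:ℝ) = -0 by ring, min_neg_neg, neg_zero]
  rw [this, integral_neg, c1]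

lemma q2 : ∫ x, (min x 0)^2 ∂gam = 1/2 := by
  rw [int_neg_comp (fun x => (min x 0)^2) ((continuous_id.min continuous_const).pow 2)]
  have : (fun x : ℝ => (min (-x) 0)^2) = fun x : ℝ => (max x 0)^2 := by
    funext x
    rw [show (0:ℝ) = -0 by ring, min_neg_neg, neg_zero]
    ring
  rw [this, q1]

lemma s2 : ∫ x, x^2 ∂gam = 1 := by
  have hsp : (fun x : ℝ => x^2) = fun x : ℝ => (max x 0)^2 + (min x 0)^2 := by
    funext x
    rcases le_total x 0 with h | h
    · rw [max_eq_right h, min_eq_left h]; ring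
    · rw [max_eq_left h, min_eq_right h]; ring
  rw [hsp, integral_add hIntMaxSq hIntMinSq, q1, q2]
  norm_num

lemma z0 : ∫ x, x ∂gam = 0 := by
  have hsp : (fun x : ℝ => x) = fun x : ℝ => max x 0 + min x 0 := by
    funext x
    rw [max_add_min]
    ring
  rw [hsp, integral_add hIntMax hIntMin, c1, m1]
  ring

lemma hmap1 : Measure.map (fun x : ℝ => x + 1) gam = gaussianReal 1 1 := by
  have h := gaussianReal_map_add_const (μ := 0) (v := 1) 1
  rw [zero_add] at h
  exact h

local notation "C" => (Real.sqrt (2*π))⁻¹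

lemma integral_mu1 (g : ℝ → ℝ) (hg : Continuous g) :
    ∫ x, g x ∂(gaussianReal 1 1) = ∫ x, g (x + 1) ∂gam := by
  rw [← hmap1, integral_map (measurable_id'.add_const 1).aemeasurable hg.aestronglyMeasurable]

lemma integrable_mu1_iff (g : ℝ → ℝ) (hg : Continuous g) :
    Integrable g (gaussianReal 1 1) ↔ Integrable (fun x => g (x + 1)) gam := by
  rw [← hmap1, integrable_map_measure hg.aestronglyMeasurable
    (measurable_id'.add_const 1).aemeasurable]
  rfl

lemma EX : ∫ x, x ∂(gaussianReal 1 1) = 1 := by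
  rw [integral_mu1 (fun x => x) continuous_id, integral_add hIntId (integrable_const 1), z0]
  simp

lemma hIntAffine : Integrable (fun x : ℝ => 2 * x + 1) gam :=
  (hIntId.const_mul 2).add (integrable_const 1)

lemma sq_shift : (fun x : ℝ => (x + 1)^2) = fun x : ℝ => x^2 + (2 * x + 1) := by
  funext x; ring

lemma hIntSqShift : Integrable (fun x : ℝ => (x + 1)^2) gam := by
  rw [sq_shift]; exact hIntSq.add hIntAffine

lemma EX2 : ∫ x, x^2 ∂(gaussianReal 1 1) = 2 := by
  rw [integral_mu1 (fun x => x^2) (continuous_id.pow 2)]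
  rw [sq_shift, integral_add hIntSq hIntAffine, s2,
    integral_add (hIntId.const_mul 2) (integrable_const 1), integral_const_mul, z0]
  simp
  norm_num

lemma hIntSqMu1 : Integrable (fun x : ℝ => x^2) (gaussianReal 1 1) := by
  rw [integrable_mu1_iff (fun x => x^2) (continuous_pow 2)]
  exact hIntSqShift

lemma mem_X : MemLp (fun x : ℝ => x) 2 (gaussianReal 1 1) :=
  (memLp_two_iff_integrable_sq (continuous_id : Continuous fun x : ℝ => x).aestronglyMeasurable).mpr hIntSqMu1

lemma contY : Continuous (fun x : ℝ => min x 1) := continuous_id.min continuous_const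

lemma mem_Y : MemLp (fun x : ℝ => min x 1) 2 (gaussianReal 1 1) := by
  refine (memLp_two_iff_integrable_sq contY.aestronglyMeasurable).mpr ?_
  refine Integrable.mono (g := fun x : ℝ => x^2 + 1)
    (f := fun x : ℝ => (min x 1)^2)
    (hIntSqMu1.add (integrable_const 1))
    ((contY.pow 2).aestronglyMeasurable)
    (Filter.Eventually.of_forall fun x => ?_)
  simp only [Real.norm_eq_abs]
  rw [abs_of_nonneg (by positivity : (0:ℝ) ≤ (min x 1)^2),
    abs_of_nonneg (by positivity : (0:ℝ) ≤ x^2 + 1)]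
  rcases le_total x 1 with h | h
  · rw [min_eq_left h]; nlinarith
  · rw [min_eq_right h]; nlinarith

lemma min_shift : (fun x : ℝ => min (x + 1) 1) = fun x : ℝ => 1 + min x 0 := by
  funext x
  rcases le_total x 0 with h | h
  · rw [min_eq_left (by linarith), min_eq_left h]; ring
  · rw [min_eq_right (by linarith), min_eq_right h]; ring

lemma EY1 : ∫ x, min x 1 ∂(gaussianReal 1 1) = 1 - C := by
  rw [integral_mu1 (fun x => min x 1) (continuous_id.min continuous_const), min_shift,
    integral_add (integrable_const 1) hIntMin, m1]
  simp
  ring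

lemma EY2 : ∫ x, (min x 1)^2 ∂(gaussianReal 1 1) = 3/2 - 2*C := by
  rw [integral_mu1 (fun x => (min x 1)^2) ((continuous_id.min continuous_const).pow 2)]
  have h : (fun x : ℝ => (min (x + 1) 1)^2) = fun x : ℝ => 1 + (2 * min x 0 + (min x 0)^2) := by
    funext x
    have := congrFun min_shift x
    rw [this]
    ring
  have hint2 : Integrable (fun x : ℝ => 2 * min x 0 + (min x 0)^2) gam :=
    (hIntMin.const_mul 2).add hIntMinSq
  rw [h, integral_add (integrable_const 1) hint2,
    integral_add (hIntMin.const_mul 2) hIntMinSq, integral_const_mul, m1, q2]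
  simp
  ring

lemma varX : variance (fun x : ℝ => x) (gaussianReal 1 1) = 1 := by
  rw [variance_eq_sub mem_X]
  simp only [Pi.pow_apply]
  rw [EX2, EX]
  norm_num

lemma varY : variance (fun x : ℝ => min x 1) (gaussianReal 1 1) = 1/2 - C^2 := by
  rw [variance_eq_sub mem_Y]
  simp only [Pi.pow_apply]
  rw [EY2, EY1]
  ring

lemma hClt : C < 1/2 := by
  have h4 : (2:ℝ) < Real.sqrt (2*π) :=
    (Real.lt_sqrt (by norm_num)).mpr (by nlinarith [Real.pi_gt_three])
  calc C < 2⁻¹ := by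
        apply inv_strictAnti₀ (by norm_num) h4
    _ = 1/2 := by norm_num

lemma hCpos : 0 < C := by positivity

lemma final_ineq : 1 < (1 - C) / Real.sqrt (1/2 - C^2) := by
  have h1 := hClt
  have h2 := hCpos
  have hvpos : (0:ℝ) < 1/2 - C^2 := by nlinarith
  have hlt : 1/2 - C^2 < (1 - C)^2 := by nlinarith
  have hs : Real.sqrt (1/2 - C^2) < 1 - C := by
    have := Real.sqrt_lt_sqrt (le_of_lt hvpos) hlt
    rwa [Real.sqrt_sq (by linarith)] at this
  have hspos : 0 < Real.sqrt (1/2 - C^2) := Real.sqrt_pos.mpr hvpos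
  rw [lt_div_iff₀ hspos, one_mul]
  exact hs

/-- The classical Sharpe ratio `S(X) = E[X]/√(Var X)` is not monotone: there are
`Y ≤ X` a.s. with `S(Y) > S(X)`. In particular, for `X ~ N(1,1)` (realized as the
identity on `(ℝ, gaussianReal 1 1)`) and `Y = min(X,1)`, one has `S(X) = 1` and
`S(Y) > 1`. -/
theorem sharpe_not_monotone :
    (∃ (Ω : Type) (_ : MeasurableSpace Ω) (μ : Measure Ω) (_ : IsProbabilityMeasure μ)
      (X Y : Ω → ℝ), MemLp X 2 μ ∧ MemLp Y 2 μ ∧ (∀ᵐ ω ∂μ, Y ω ≤ X ω) ∧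
        (∫ ω, X ω ∂μ) / Real.sqrt (variance X μ) <
          (∫ ω, Y ω ∂μ) / Real.sqrt (variance Y μ)) ∧
    (∫ x, x ∂(gaussianReal 1 1)) / Real.sqrt (variance id (gaussianReal 1 1)) = 1 ∧
    1 < (∫ x, min x 1 ∂(gaussianReal 1 1)) /
        Real.sqrt (variance (fun x => min x 1) (gaussianReal 1 1)) := by
  have hvarid : variance id (gaussianReal 1 1) = 1 := varX
  have hSX : (∫ x, x ∂(gaussianReal 1 1)) / Real.sqrt (variance id (gaussianReal 1 1)) = 1 := by
    rw [hvarid, EX, Real.sqrt_one, div_one]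
  have hSY : 1 < (∫ x, min x 1 ∂(gaussianReal 1 1)) /
      Real.sqrt (variance (fun x => min x 1) (gaussianReal 1 1)) := by
    rw [varY, EY1]
    exact final_ineq
  refine ⟨⟨ℝ, inferInstance, gaussianReal 1 1, inferInstance, fun x => x, fun x => min x 1,
    mem_X, mem_Y, Filter.Eventually.of_forall fun x => min_le_left x 1, ?_⟩, hSX, hSY⟩
  calc (∫ x, x ∂(gaussianReal 1 1)) / Real.sqrt (variance (fun x : ℝ => x) (gaussianReal 1 1))
      = 1 := by rw [varX, EX, Real.sqrt_one, div_one]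
    _ < _ := hSY
end

section
/- The monotone Sharpe ratio MSR_p is law invariant: if X and Y have the same distribution, then MSR_p(X) = MSR_p(Y). The key step is that for any Z ≤ X one may replace Z by E[Z | X], which satisfies E[Z|X] ≤ X, E[E[Z|X]] = E[Z], and σ_p(E[Z|X]) ≤ σ_p(Z). -/
open MeasureTheory ENNReal

/-- The `L^p`-deviation: `σ_p(X) = inf_{c ∈ ℝ} ‖X - c‖_p`. -/
noncomputable def sigmaDev {Ω : Type*} [MeasurableSpace Ω] (p : ℝ≥0∞)
    (μ : Measure Ω) (X : Ω → ℝ) : ℝ≥0∞ :=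
  ⨅ c : ℝ, eLpNorm (fun ω => X ω - c) p μ

/-- The monotone Sharpe ratio in `L^p`:
`MSR_p(X) = sup_{Z ≤ X a.s., Z ∈ L^p} E[Z] / σ_p(Z)`. -/
noncomputable def MSR {Ω : Type*} [MeasurableSpace Ω] (p : ℝ≥0∞)
    (μ : Measure Ω) (X : Ω → ℝ) : ℝ≥0∞ :=
  ⨆ Z ∈ {Z : Ω → ℝ | MemLp Z p μ ∧ ∀ᵐ ω ∂μ, Z ω ≤ X ω},
    ENNReal.ofReal (∫ ω, Z ω ∂μ) / sigmaDev p μ Z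

section Aux

open Real Filter Topology

/-- slope of the tangent to `|·|^r` at `q` -/
noncomputable def slr (r q : ℝ) : ℝ := r * Real.sign q * |q| ^ (r - 1)

lemma tangent_le {r : ℝ} (hr : 1 ≤ r) (q y : ℝ) :
    |q| ^ r + slr r q * (y - q) ≤ |y| ^ r := by
  have hr0 : (0:ℝ) < r := lt_of_lt_of_le one_pos hr
  -- key case : 0 < q, 0 ≤ y
  have key : ∀ q y : ℝ, 0 < q → 0 ≤ y → q ^ r + r * q ^ (r-1) * (y - q) ≤ y ^ r := by
    intro q y hq hy
    have hs : (-1:ℝ) ≤ y / q - 1 := by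
      have : 0 ≤ y / q := div_nonneg hy hq.le
      linarith
    have hB := one_add_mul_self_le_rpow_one_add hs hr
    rw [add_sub_cancel] at hB
    have hqr : (0:ℝ) < q ^ r := Real.rpow_pos_of_pos hq r
    have h1 : (q ^ r) * (1 + r * (y / q - 1)) ≤ (q ^ r) * (y / q) ^ r :=
      mul_le_mul_of_nonneg_left hB hqr.le
    have h2 : (y / q) ^ r = y ^ r / q ^ r := Real.div_rpow hy hq.le r
    have h3 : q ^ r * (y ^ r / q ^ r) = y ^ r := by field_simp
    have h4 : q ^ (r - 1) = q ^ r / q := by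
      rw [Real.rpow_sub hq, Real.rpow_one]
    rw [h2, h3] at h1
    rw [h4]
    have hqne : q ≠ 0 := hq.ne'
    calc q ^ r + r * (q ^ r / q) * (y - q)
        = q ^ r * (1 + r * (y / q - 1)) := by field_simp
      _ ≤ y ^ r := h1
  rcases lt_trichotomy q 0 with hq | hq | hq
  · -- q < 0 : reduce to -q, -y
    have h := key (-q) (-y + (|y| + y)) (by linarith) (by
      have := abs_nonneg y; have := neg_abs_le y; linarith)
    have hy' : -y + (|y| + y) = |y| := by ring
    rw [hy'] at h
    have habs : |q| = -q := abs_of_neg hq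
    have hsg : Real.sign q = -1 := Real.sign_of_neg hq
    have hmono : slr r q * (y - q) ≤ r * (-q) ^ (r-1) * (|y| - -q) := by
      rw [slr, hsg, habs]
      have h1 : r * -1 * (-q) ^ (r - 1) * (y - q) = r * (-q) ^ (r-1) * (q - y) := by ring
      rw [h1]
      have : q - y ≤ |y| - -q := by
        have := neg_abs_le y; linarith
      have hnn : 0 ≤ r * (-q) ^ (r-1) :=
        mul_nonneg hr0.le (Real.rpow_nonneg (by linarith) _)
      exact mul_le_mul_of_nonneg_left this hnn
    rw [habs]
    calc (-q) ^ r + slr r q * (y - q) ≤ (-q) ^ r + r * (-q) ^ (r-1) * (|y| - -q) := by linarith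
      _ ≤ |y| ^ r := h
  · -- q = 0
    subst hq
    simp [slr, Real.sign_zero, abs_zero, Real.zero_rpow hr0.ne']
    positivity
  · -- q > 0
    have h := key q (|y|) hq (abs_nonneg y)
    have habs : |q| = q := abs_of_pos hq
    have hsg : Real.sign q = 1 := Real.sign_of_pos hq
    have hmono : slr r q * (y - q) ≤ r * q ^ (r-1) * (|y| - q) := by
      rw [slr, hsg, habs, mul_one]
      have : y - q ≤ |y| - q := by have := le_abs_self y; linarith
      exact mul_le_mul_of_nonneg_left this
        (mul_nonneg hr0.le (Real.rpow_nonneg hq.le _))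
    rw [habs]
    linarith

lemma condexp_jensen {Ω : Type*} {m m0 : MeasurableSpace Ω} (hm : m ≤ m0)
    (μ : Measure Ω) [IsProbabilityMeasure μ] {r : ℝ} (hr : 1 ≤ r)
    {f : Ω → ℝ} (hfi : Integrable f μ)
    (hφ : Integrable (fun ω => |f ω| ^ r) μ) :
    ∀ᵐ ω ∂μ, |(μ[f|m]) ω| ^ r ≤ (μ[fun ω => |f ω| ^ r|m]) ω := by
  have hr0 : (0:ℝ) < r := lt_of_lt_of_le one_pos hr
  have hq : ∀ q : ℚ, ∀ᵐ ω ∂μ,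
      |(q:ℝ)| ^ r + slr r q * ((μ[f|m]) ω - q) ≤ (μ[fun ω => |f ω| ^ r|m]) ω := by
    intro q
    set c : ℝ := (q : ℝ)
    set g : Ω → ℝ := fun ω => |c| ^ r + slr r c * (f ω - c) with hg
    have hgi : Integrable g μ :=
      (integrable_const _).add ((hfi.sub (integrable_const c)).const_mul _)
    have h1 : μ[g|m] ≤ᵐ[μ] μ[fun ω => |f ω| ^ r|m] :=
      condExp_mono hgi hφ (Eventually.of_forall fun ω => tangent_le hr c (f ω))
    have hgeq : g = (fun _ω => |c| ^ r - slr r c * c) + (slr r c) • f := by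
      funext ω; simp only [hg, Pi.add_apply, Pi.smul_apply, smul_eq_mul]; ring
    have h2 : μ[g|m] =ᵐ[μ] fun ω => |c| ^ r + slr r c * ((μ[f|m]) ω - c) := by
      rw [hgeq]
      refine (condExp_add (integrable_const _) (hfi.smul (slr r c)) m).trans ?_
      have h3 := condExp_smul (μ := μ) (m := m) (slr r c) f
      have h4 := condExp_const hm (|c| ^ r - slr r c * c) (μ := μ)
      filter_upwards [h3] with ω h3ω
      simp only [Pi.add_apply, h4, h3ω, Pi.smul_apply, smul_eq_mul]
      ring
    filter_upwards [h1, h2] with ω h1ω h2ω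
    rw [← h2ω]; exact h1ω
  rw [← ae_all_iff] at hq
  filter_upwards [hq] with ω hω
  set a : ℝ := (μ[f|m]) ω
  set b : ℝ := (μ[fun ω => |f ω| ^ r|m]) ω
  refine le_of_forall_pos_le_add fun ε hε => ?_
  have hc : ContinuousAt (fun t : ℝ => |t| ^ r) a :=
    (continuous_abs.rpow_const (fun t => Or.inr hr0.le)).continuousAt
  rw [Metric.continuousAt_iff] at hc
  obtain ⟨δ, hδ, hδ'⟩ := hc (ε/2) (by linarith)
  set M : ℝ := r * (|a| + 1) ^ (r - 1) with hM
  have hM0 : 0 ≤ M := mul_nonneg hr0.le (Real.rpow_nonneg (by positivity) _)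
  set δ' : ℝ := min δ (min 1 (ε/2/(M+1))) with hδ'def
  have hδ'0 : 0 < δ' := by
    refine lt_min hδ (lt_min one_pos ?_)
    positivity
  obtain ⟨q, hqnear⟩ := exists_rat_near a hδ'0
  set c : ℝ := (q : ℝ)
  have hca : |a - c| < δ' := hqnear
  have h1 : |(|c| ^ r) - |a| ^ r| < ε / 2 := by
    have := hδ' (x := c) (by
      rw [Real.dist_eq]
      calc |c - a| = |a - c| := abs_sub_comm _ _
        _ < δ' := hca
        _ ≤ δ := min_le_left _ _)
    rwa [Real.dist_eq] at this
  have hcabs : |c| ≤ |a| + 1 := by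
    have h2 : |a - c| < 1 := lt_of_lt_of_le hca (le_trans (min_le_right _ _) (min_le_left _ _))
    have := abs_sub_abs_le_abs_sub c a
    rw [abs_sub_comm c a] at this
    linarith
  have hslr : |slr r c| ≤ M := by
    rw [slr, abs_mul, abs_mul]
    have h3 : |Real.sign c| ≤ 1 := by
      rcases Real.sign_apply_eq c with h | h | h <;> rw [h] <;> norm_num
    have h4 : |(|c| ^ (r-1))| = |c| ^ (r-1) := abs_of_nonneg (Real.rpow_nonneg (abs_nonneg _) _)
    have h5 : |c| ^ (r-1) ≤ (|a| + 1) ^ (r-1) :=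
      Real.rpow_le_rpow (abs_nonneg _) hcabs (by linarith)
    calc |r| * |Real.sign c| * |(|c| ^ (r-1))|
        ≤ |r| * 1 * |(|c| ^ (r-1))| := by
          apply mul_le_mul_of_nonneg_right _ (abs_nonneg _)
          exact mul_le_mul_of_nonneg_left h3 (abs_nonneg _)
      _ = r * (|c| ^ (r-1)) := by rw [abs_of_pos hr0, mul_one, h4]
      _ ≤ M := mul_le_mul_of_nonneg_left h5 hr0.le
  have hprod : |slr r c| * |a - c| ≤ M * (ε/2/(M+1)) := by
    apply mul_le_mul hslr _ (abs_nonneg _) hM0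
    exact le_of_lt (lt_of_lt_of_le hca (le_trans (min_le_right _ _) (min_le_right _ _)))
  have hMfrac : M * (ε/2/(M+1)) ≤ ε/2 := by
    have h8 : M / (M+1) ≤ 1 := by
      rw [div_le_one (by linarith)]; linarith
    have h9 : M * (ε/2/(M+1)) = M/(M+1) * (ε/2) := by ring
    rw [h9]
    calc M/(M+1) * (ε/2) ≤ 1 * (ε/2) := by
          exact mul_le_mul_of_nonneg_right h8 (by linarith)
      _ = ε/2 := one_mul _
  have htan := hω q
  have h6 : slr r c * (a - c) ≥ -(|slr r c| * |a - c|) := by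
    rw [← abs_mul]; exact neg_abs_le _
  have h7 : |c| ^ r ≥ |a| ^ r - ε/2 := by
    have := abs_sub_le_iff.mp h1.le
    linarith [this.2]
  calc |a| ^ r ≤ |c| ^ r + ε/2 := by linarith
    _ ≤ (|c| ^ r + slr r c * (a - c)) + (|slr r c| * |a - c|) + ε/2 := by linarith
    _ ≤ b + M * (ε/2/(M+1)) + ε/2 := by linarith
    _ ≤ b + ε := by linarith

lemma eLpNorm_condexp_le' {Ω : Type*} {m m0 : MeasurableSpace Ω} (hm : m ≤ m0)
    (μ : Measure Ω) [IsProbabilityMeasure μ] {p : ℝ≥0∞} (hp : 1 ≤ p) (hp' : p ≠ ∞)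
    {f : Ω → ℝ} (hf : MemLp f p μ) :
    eLpNorm (μ[f|m]) p μ ≤ eLpNorm f p μ := by
  haveI : SigmaFinite (μ.trim hm) := inferInstance
  set r : ℝ := p.toReal with hrdef
  have hp0 : p ≠ 0 := fun h => by simp [h] at hp
  have hr1 : 1 ≤ r := by
    rw [hrdef, ← ENNReal.toReal_one]
    exact ENNReal.toReal_mono hp' hp
  have hr0 : (0:ℝ) < r := lt_of_lt_of_le one_pos hr1
  have hfi : Integrable f μ := hf.integrable hp
  have hφ : Integrable (fun ω => |f ω| ^ r) μ := by
    have := hf.integrable_norm_rpow hp0 hp'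
    simpa [Real.norm_eq_abs] using this
  have hφnn : 0 ≤ᵐ[μ] fun ω => |f ω| ^ r :=
    Eventually.of_forall fun ω => Real.rpow_nonneg (abs_nonneg _) _
  have hjen := condexp_jensen hm μ hr1 hfi hφ
  rw [eLpNorm_eq_lintegral_rpow_enorm_toReal hp0 hp', eLpNorm_eq_lintegral_rpow_enorm_toReal hp0 hp']
  apply ENNReal.rpow_le_rpow _ (by positivity)
  have hnn : ∀ (g : Ω → ℝ) (ω : Ω), ‖g ω‖ₑ ^ r = ENNReal.ofReal (|g ω| ^ r) := by
    intro g ω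
    rw [Real.enorm_eq_ofReal_abs, ← ENNReal.ofReal_rpow_of_nonneg (abs_nonneg _) hr0.le]
  simp only [← hrdef, hnn]
  calc ∫⁻ ω, ENNReal.ofReal (|(μ[f|m]) ω| ^ r) ∂μ
      ≤ ∫⁻ ω, ENNReal.ofReal ((μ[fun ω => |f ω| ^ r|m]) ω) ∂μ := by
        refine lintegral_mono_ae ?_
        filter_upwards [hjen] with ω hω
        exact ENNReal.ofReal_le_ofReal hω
    _ = ENNReal.ofReal (∫ ω, (μ[fun ω => |f ω| ^ r|m]) ω ∂μ) :=
        (ofReal_integral_eq_lintegral_ofReal integrable_condExp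
          (condExp_nonneg hφnn)).symm
    _ = ENNReal.ofReal (∫ ω, |f ω| ^ r ∂μ) := by rw [integral_condExp hm]
    _ = ∫⁻ ω, ENNReal.ofReal (|f ω| ^ r) ∂μ :=
        ofReal_integral_eq_lintegral_ofReal hφ hφnn

lemma simpleFunc_factor {Ω : Type*} (X : Ω → ℝ) :
    ∀ s : @SimpleFunc Ω (MeasurableSpace.comap X Real.measurableSpace) ℝ,
    ∃ g : ℝ → ℝ, Measurable g ∧ ∀ ω, g (X ω) = s ω := by
  letI mX : MeasurableSpace Ω := MeasurableSpace.comap X Real.measurableSpace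
  intro s
  have hB : ∀ c : ℝ, ∃ B : Set ℝ, MeasurableSet B ∧ X ⁻¹' B = s ⁻¹' {c} := fun c =>
    MeasurableSpace.measurableSet_comap.mp (s.measurableSet_fiber c)
  choose B hBm hBeq using hB
  refine ⟨fun x => ∑ c ∈ s.range, Set.indicator (B c) (fun _ => c) x, ?_, ?_⟩
  · exact Finset.measurable_sum _ fun c _ => measurable_const.indicator (hBm c)
  · intro ω
    have hmem : ∀ c : ℝ, X ω ∈ B c ↔ s ω = c := by
      intro c
      constructor
      · intro h
        have : ω ∈ X ⁻¹' B c := h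
        rw [hBeq c] at this
        exact this
      · intro h
        have : ω ∈ s ⁻¹' {c} := h
        rw [← hBeq c] at this
        exact this
    have : ∀ c ∈ s.range, Set.indicator (B c) (fun _ => c) (X ω)
        = if c = s ω then c else 0 := by
      intro c _
      by_cases h : X ω ∈ B c
      · rw [Set.indicator_of_mem h, if_pos ((hmem c).mp h).symm]
      · rw [Set.indicator_of_notMem h, if_neg (fun hc => h ((hmem c).mpr hc.symm))]
    show (∑ c ∈ s.range, Set.indicator (B c) (fun _ => c) (X ω)) = s ω
    rw [Finset.sum_congr rfl this, Finset.sum_ite_eq' s.range (s ω) (fun c => c),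
      if_pos (s.mem_range_self ω)]

lemma factor_ae {Ω : Type*} [m0 : MeasurableSpace Ω] (μ : Measure Ω) (X : Ω → ℝ)
    (hXm : Measurable X) {f : Ω → ℝ}
    (hf : StronglyMeasurable[MeasurableSpace.comap X Real.measurableSpace] f) :
    ∃ g : ℝ → ℝ, Measurable g ∧ f =ᵐ[μ] fun ω => g (X ω) := by
  choose g hgm hgeq using fun n => simpleFunc_factor X (hf.approx n)
  have hconv : ∀ᵐ x ∂(μ.map X), ∃ l : ℝ, Tendsto (fun n => g n x) atTop (𝓝 l) := by
    rw [ae_map_iff hXm.aemeasurable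
      (measurableSet_exists_tendsto (fun n => hgm n))]
    refine Eventually.of_forall fun ω => ⟨f ω, ?_⟩
    have : (fun n => g n (X ω)) = fun n => hf.approx n ω := by
      funext n; exact hgeq n ω
    rw [this]
    exact hf.tendsto_approx ω
  obtain ⟨G, hGm, hGlim⟩ := measurable_limit_of_tendsto_metrizable_ae
    (fun n => (hgm n).aemeasurable) hconv
  refine ⟨G, hGm, ?_⟩
  have h2 : ∀ᵐ ω ∂μ, Tendsto (fun n => g n (X ω)) atTop (𝓝 (G (X ω))) :=
    ae_of_ae_map hXm.aemeasurable hGlim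
  filter_upwards [h2] with ω hω
  have : (fun n => g n (X ω)) = fun n => hf.approx n ω := by
    funext n; exact hgeq n ω
  rw [this] at hω
  exact tendsto_nhds_unique (hf.tendsto_approx ω) hω


lemma MSR_le_of_law_eq {Ω₁ Ω₂ : Type*} [MeasurableSpace Ω₁] [MeasurableSpace Ω₂]
    (μ₁ : Measure Ω₁) [IsProbabilityMeasure μ₁]
    (μ₂ : Measure Ω₂) [IsProbabilityMeasure μ₂]
    (p : ℝ≥0∞) (hp : 1 ≤ p) (hp' : p ≠ ∞)
    (X : Ω₁ → ℝ) (Y : Ω₂ → ℝ) (hXm : Measurable X) (hYm : Measurable Y)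
    (hX : MemLp X p μ₁)
    (hlaw : μ₁.map X = μ₂.map Y) :
    MSR p μ₁ X ≤ MSR p μ₂ Y := by
  rw [MSR, MSR]
  refine iSup₂_le fun Z hZ => ?_
  obtain ⟨hZp, hZX⟩ := hZ
  have hm : MeasurableSpace.comap X Real.measurableSpace ≤ _ := hXm.comap_le
  haveI : SigmaFinite (μ₁.trim hm) := inferInstance
  have hZi : Integrable Z μ₁ := hZp.integrable hp
  have hXi : Integrable X μ₁ := hX.integrable hp
  set W : Ω₁ → ℝ := μ₁[Z|MeasurableSpace.comap X Real.measurableSpace] with hWdef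
  have hWsm : StronglyMeasurable[MeasurableSpace.comap X Real.measurableSpace] W :=
    stronglyMeasurable_condExp
  obtain ⟨g, hgm, hgW⟩ := factor_ae μ₁ X hXm hWsm
  have hWle : W ≤ᵐ[μ₁] X := by
    have h1 := condExp_mono (m := MeasurableSpace.comap X Real.measurableSpace) hZi hXi hZX
    have h2 : μ₁[X|MeasurableSpace.comap X Real.measurableSpace] = X :=
      condExp_of_stronglyMeasurable hm
        ((comap_measurable X).stronglyMeasurable) hXi
    rw [h2] at h1; exact h1
  have hgXle : ∀ᵐ ω ∂μ₁, g (X ω) ≤ X ω := by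
    filter_upwards [hgW, hWle] with ω h1 h2
    rw [← h1]; exact h2
  have hsetm : MeasurableSet {x : ℝ | g x ≤ x} := measurableSet_le hgm measurable_id
  have hgYle : ∀ᵐ ω ∂μ₂, g (Y ω) ≤ Y ω := by
    have hmap : ∀ᵐ x ∂(μ₂.map Y), g x ≤ x := by
      rw [← hlaw, ae_map_iff hXm.aemeasurable hsetm]
      exact hgXle
    exact ae_of_ae_map hYm.aemeasurable hmap
  have hσ : ∀ c : ℝ, eLpNorm (fun ω => W ω - c) p μ₁ ≤ eLpNorm (fun ω => Z ω - c) p μ₁ := by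
    intro c
    have hc : μ₁[fun ω => Z ω - c|MeasurableSpace.comap X Real.measurableSpace]
        =ᵐ[μ₁] fun ω => W ω - c := by
      have h := condExp_sub (m := MeasurableSpace.comap X Real.measurableSpace)
        hZi (integrable_const c)
      have h2 : μ₁[(fun _ : Ω₁ => c)|MeasurableSpace.comap X Real.measurableSpace]
          = fun _ => c := condExp_const hm c
      filter_upwards [h] with ω hω
      show (μ₁[Z - (fun _ : Ω₁ => c)|MeasurableSpace.comap X Real.measurableSpace]) ω = W ω - c
      rw [hω]
      simp only [Pi.sub_apply, h2, hWdef]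
    have hle := eLpNorm_condexp_le' hm μ₁ hp hp' (hZp.sub (memLp_const c))
    calc eLpNorm (fun ω => W ω - c) p μ₁
        = eLpNorm (μ₁[fun ω => Z ω - c|MeasurableSpace.comap X Real.measurableSpace]) p μ₁ :=
          (eLpNorm_congr_ae hc).symm
      _ ≤ eLpNorm (fun ω => Z ω - c) p μ₁ := hle
  have heLg : ∀ c : ℝ, eLpNorm (fun ω => g (Y ω) - c) p μ₂
      = eLpNorm (fun ω => W ω - c) p μ₁ := by
    intro c
    have hsm1 : AEStronglyMeasurable (fun x : ℝ => g x - c) (μ₂.map Y) :=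
      (hgm.sub measurable_const).aestronglyMeasurable
    have hsm2 : AEStronglyMeasurable (fun x : ℝ => g x - c) (μ₁.map X) :=
      (hgm.sub measurable_const).aestronglyMeasurable
    calc eLpNorm (fun ω => g (Y ω) - c) p μ₂
        = eLpNorm ((fun x => g x - c) ∘ Y) p μ₂ := rfl
      _ = eLpNorm (fun x => g x - c) p (μ₂.map Y) :=
          (eLpNorm_map_measure hsm1 hYm.aemeasurable).symm
      _ = eLpNorm (fun x => g x - c) p (μ₁.map X) := by rw [hlaw]
      _ = eLpNorm ((fun x => g x - c) ∘ X) p μ₁ :=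
          eLpNorm_map_measure hsm2 hXm.aemeasurable
      _ = eLpNorm (fun ω => W ω - c) p μ₁ := by
          refine eLpNorm_congr_ae ?_
          filter_upwards [hgW] with ω hω
          show g (X ω) - c = W ω - c
          rw [hω]
  have hWp : MemLp W p μ₁ :=
    ⟨(hWsm.mono hm).aestronglyMeasurable,
      lt_of_le_of_lt (eLpNorm_condexp_le' hm μ₁ hp hp' hZp) hZp.2⟩
  have hgYp : MemLp (fun ω => g (Y ω)) p μ₂ := by
    refine ⟨(hgm.comp hYm).aestronglyMeasurable, ?_⟩
    have := heLg 0
    simp only [sub_zero] at this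
    rw [this]
    exact hWp.2
  have hint : ∫ ω, g (Y ω) ∂μ₂ = ∫ ω, Z ω ∂μ₁ :=
    calc ∫ ω, g (Y ω) ∂μ₂
        = ∫ x, g x ∂(μ₂.map Y) :=
          (integral_map hYm.aemeasurable hgm.aestronglyMeasurable).symm
      _ = ∫ x, g x ∂(μ₁.map X) := by rw [hlaw]
      _ = ∫ ω, g (X ω) ∂μ₁ := integral_map hXm.aemeasurable hgm.aestronglyMeasurable
      _ = ∫ ω, W ω ∂μ₁ := integral_congr_ae hgW.symm
      _ = ∫ ω, Z ω ∂μ₁ := integral_condExp hm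
  have hσ2 : sigmaDev p μ₂ (fun ω => g (Y ω)) ≤ sigmaDev p μ₁ Z := by
    rw [sigmaDev, sigmaDev]
    refine iInf_mono fun c => ?_
    rw [heLg c]
    exact hσ c
  refine le_trans ?_ (le_iSup₂ (f := fun Z _ =>
    ENNReal.ofReal (∫ ω, Z ω ∂μ₂) / sigmaDev p μ₂ Z)
    (fun ω => g (Y ω)) (⟨hgYp, hgYle⟩ : _ ∈ {Z : Ω₂ → ℝ | MemLp Z p μ₂ ∧ ∀ᵐ ω ∂μ₂, Z ω ≤ Y ω}))
  rw [hint]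
  exact ENNReal.div_le_div le_rfl hσ2

end Aux

/-- The monotone Sharpe ratio is law invariant: if `X` and `Y` (possibly on
different probability spaces) have the same distribution, then
`MSR_p(X) = MSR_p(Y)`. -/
theorem MSR_law_invariant {Ω₁ Ω₂ : Type*} [MeasurableSpace Ω₁] [MeasurableSpace Ω₂]
    (μ₁ : Measure Ω₁) [IsProbabilityMeasure μ₁]
    (μ₂ : Measure Ω₂) [IsProbabilityMeasure μ₂]
    (p : ℝ≥0∞) (hp : 1 ≤ p) (hp' : p ≠ ∞)
    (X : Ω₁ → ℝ) (Y : Ω₂ → ℝ) (hXm : Measurable X) (hYm : Measurable Y)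
    (hX : MemLp X p μ₁) (hY : MemLp Y p μ₂)
    (hlaw : μ₁.map X = μ₂.map Y) :
    MSR p μ₁ X = MSR p μ₂ Y := by
  exact le_antisymm
    (MSR_le_of_law_eq μ₁ μ₂ p hp hp' X Y hXm hYm hX hlaw)
    (MSR_le_of_law_eq μ₂ μ₁ p hp hp' Y X hYm hXm hY hlaw.symm)
end

section
/- The function λ ↦ Q_p(X,λ) is non-decreasing on [0,1), and it is strictly increasing at any λ where Q_p(X,λ) < esssup X: if Q_p(X,λ) < esssup X and λ' < λ, then Q_p(X,λ') < Q_p(X,λ). -/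
open MeasureTheory ENNReal

/-- The `L^p`-CVAR of `X` at level `λ ∈ [0,1)`:
`Q_p(X,λ) = inf_{c ∈ ℝ} ((1-λ)⁻¹ ‖(X-c)_+‖_p + c)`. -/
noncomputable def cvarLp {Ω : Type*} [MeasurableSpace Ω] (p : ℝ≥0∞)
    (μ : Measure Ω) (X : Ω → ℝ) (l : ℝ) : ℝ :=
  ⨅ c : ℝ, ((1 - l)⁻¹ * (eLpNorm (fun ω => max (X ω - c) 0) p μ).toReal + c)

/-- `λ ↦ Q_p(X,λ)` is non-decreasing on `[0,1)`, and strictly increasing at any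
`λ` with `Q_p(X,λ) < esssup X`: if `Q_p(X,λ) < esssup X` and `λ' < λ`, then
`Q_p(X,λ') < Q_p(X,λ)`. -/
theorem cvarLp_monotone_strict {Ω : Type*} [MeasurableSpace Ω]
    (μ : Measure Ω) [IsProbabilityMeasure μ]
    (p : ℝ≥0∞) (hp : 1 ≤ p) (hp' : p ≠ ∞)
    (X : Ω → ℝ) (hX : MemLp X p μ) :
    (∀ l l' : ℝ, 0 ≤ l → l ≤ l' → l' < 1 → cvarLp p μ X l ≤ cvarLp p μ X l') ∧
    (∀ l l' : ℝ, 0 ≤ l' → l' < l → l < 1 →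
      ((cvarLp p μ X l : EReal) < essSup (fun ω => (X ω : EReal)) μ) →
      cvarLp p μ X l' < cvarLp p μ X l) := by
  have hX1 : Integrable X μ := hX.integrable hp
  set m₀ := ∫ ω, X ω ∂μ with hm₀
  have hmem : ∀ c : ℝ, MemLp (fun ω => max (X ω - c) 0) p μ := fun c =>
    (hX.sub (memLp_const c)).pos_part
  have hfin : ∀ c : ℝ, eLpNorm (fun ω => max (X ω - c) 0) p μ ≠ ∞ := fun c =>
    (hmem c).eLpNorm_ne_top
  have hmeas : ∀ c : ℝ, AEStronglyMeasurable (fun ω => max (X ω - c) 0) μ := fun c =>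
    (hmem c).aestronglyMeasurable
  set N : ℝ → ℝ := fun c => (eLpNorm (fun ω => max (X ω - c) 0) p μ).toReal with hN
  have hNnonneg : ∀ c, 0 ≤ N c := fun c => ENNReal.toReal_nonneg
  -- the integral lower bound : m₀ - c ≤ N c
  have hNlb : ∀ c : ℝ, m₀ - c ≤ N c := by
    intro c
    have hint : Integrable (fun ω => X ω - c) μ := hX1.sub (integrable_const c)
    have h1 : eLpNorm (fun ω => max (X ω - c) 0) 1 μ
        ≤ eLpNorm (fun ω => max (X ω - c) 0) p μ :=
      eLpNorm_le_eLpNorm_of_exponent_le hp (hmeas c)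
    have h1' : (eLpNorm (fun ω => max (X ω - c) 0) 1 μ).toReal ≤ N c :=
      ENNReal.toReal_mono (hfin c) h1
    have heq : (eLpNorm (fun ω => max (X ω - c) 0) 1 μ).toReal
        = ∫ ω, max (X ω - c) 0 ∂μ := by
      rw [eLpNorm_one_eq_lintegral_enorm]
      rw [← integral_norm_eq_lintegral_enorm (hmeas c)]
      congr 1
      ext ω
      exact Real.norm_of_nonneg (le_max_right _ _)
    have hmono : ∫ ω, X ω - c ∂μ ≤ ∫ ω, max (X ω - c) 0 ∂μ :=
      integral_mono hint hint.pos_part (fun ω => le_max_left _ _)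
    have hsub : ∫ ω, X ω - c ∂μ = m₀ - c := by
      rw [integral_sub hX1 (integrable_const c)]
      simp [hm₀]
    linarith [heq ▸ h1']
  -- the global lower bound
  have hlb : ∀ l : ℝ, 0 ≤ l → l < 1 → ∀ c : ℝ, m₀ ≤ (1 - l)⁻¹ * N c + c := by
    intro l hl0 hl1 c
    have h1l : (0:ℝ) < 1 - l := by linarith
    have hinv1 : 1 ≤ (1 - l)⁻¹ := by
      rw [le_inv_comm₀ one_pos h1l]; linarith
    by_cases h : m₀ ≤ c
    · have : 0 ≤ (1 - l)⁻¹ * N c :=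
        mul_nonneg (by positivity) (hNnonneg c)
      linarith
    · have h2 : N c ≤ (1 - l)⁻¹ * N c := by
        nlinarith [hNnonneg c]
      linarith [hNlb c]
  have hbdd : ∀ l : ℝ, 0 ≤ l → l < 1 →
      BddBelow (Set.range fun c : ℝ => (1 - l)⁻¹ * N c + c) := by
    intro l hl0 hl1
    exact ⟨m₀, by rintro x ⟨c, rfl⟩; exact hlb l hl0 hl1 c⟩
  constructor
  · intro l l' hl0 hll' hl'1
    refine ciInf_mono (hbdd l hl0 (lt_of_le_of_lt hll' hl'1)) (fun c => ?_)
    have hinv : (1 - l)⁻¹ ≤ (1 - l')⁻¹ := by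
      apply inv_anti₀ (by linarith) (by linarith)
    have := mul_le_mul_of_nonneg_right hinv (hNnonneg c)
    linarith
  · intro l l' hl'0 hl'l hl1 hess
    have hl0 : (0:ℝ) ≤ l := le_of_lt (lt_of_le_of_lt hl'0 hl'l)
    have hl'1 : l' < 1 := lt_trans hl'l hl1
    set Ql := cvarLp p μ X l with hQl
    -- pick a real m strictly between Ql and the essential supremum
    obtain ⟨m, hm1, hm2⟩ := EReal.lt_iff_exists_real_btwn.mp hess
    have hm1' : Ql < m := by exact_mod_cast hm1
    -- η := N m > 0
    have hηpos : 0 < N m := by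
      refine ENNReal.toReal_pos (fun h0 => ?_) (hfin m)
      have hae : (fun ω => max (X ω - m) 0) =ᵐ[μ] 0 :=
        (eLpNorm_eq_zero_iff (hmeas m) (zero_lt_one.trans_le hp).ne').mp h0
      have : ∀ᵐ ω ∂μ, (fun ω => (X ω : EReal)) ω ≤ ((m : ℝ) : EReal) := by
        filter_upwards [hae] with ω hω
        have : max (X ω - m) 0 = 0 := hω
        have hx : X ω ≤ m := by
          by_contra hc
          push_neg at hc
          have : 0 < max (X ω - m) 0 := lt_max_of_lt_left (by linarith)
          linarith
        exact_mod_cast hx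
      exact absurd (essSup_le_of_ae_le _ this) (not_le.mpr hm2)
    set η := N m with hη
    have hδpos : 0 < (1 - l)⁻¹ - (1 - l')⁻¹ := by
      have : (1 - l')⁻¹ < (1 - l)⁻¹ := by
        apply inv_strictAnti₀ (by linarith) (by linarith)
      linarith
    set δ := (1 - l)⁻¹ - (1 - l')⁻¹ with hδ
    set ε := min (δ * η / 2) ((m - Ql) / 2) with hε
    have hεpos : 0 < ε := lt_min (by positivity) (by linarith)
    -- choose a near-optimal c for level l
    have : cvarLp p μ X l < Ql + ε := by linarith
    obtain ⟨c, hc⟩ := exists_lt_of_ciInf_lt this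
    have hc : (1 - l)⁻¹ * N c + c < Ql + ε := hc
    -- c < m
    have hcle : c ≤ (1 - l)⁻¹ * N c + c := by
      have : 0 ≤ (1 - l)⁻¹ * N c :=
        mul_nonneg (inv_nonneg.mpr (by linarith)) (hNnonneg c)
      linarith
    have hcm : c ≤ m := by
      have hεle : ε ≤ (m - Ql) / 2 := min_le_right _ _
      linarith
    -- N c ≥ η
    have hNcm : η ≤ N c := by
      refine ENNReal.toReal_mono (hfin c) (eLpNorm_mono (fun ω => ?_))
      rw [Real.norm_of_nonneg (le_max_right _ _), Real.norm_of_nonneg (le_max_right _ _)]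
      exact max_le_max (by linarith) le_rfl
    have hδN : δ * η ≤ δ * N c := mul_le_mul_of_nonneg_left hNcm hδpos.le
    have hQl' : cvarLp p μ X l' ≤ (1 - l')⁻¹ * N c + c :=
      ciInf_le (hbdd l' hl'0 hl'1) c
    have hεle : ε ≤ δ * η / 2 := min_le_left _ _
    have hrw : (1 - l')⁻¹ * N c + c = ((1 - l)⁻¹ * N c + c) - δ * N c := by
      rw [hδ]; ring
    have hδη : 0 < δ * η := mul_pos hδpos hηpos
    rw [hrw] at hQl'
    clear_value δ η ε Ql
    linarith
end

section
/- If P := P(X = esssup X) > 0 (in particular esssup X < ∞), then Q_p(X,λ) = esssup X for all λ ∈ [1 - P^{1/p}, 1). -/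
open MeasureTheory ENNReal

/-- If `P := P(X = esssup X) > 0` (in particular `esssup X = M < ∞`), then
`Q_p(X,λ) = esssup X` for all `λ ∈ [1 - P^{1/p}, 1)`. -/
theorem cvarLp_eq_esssup_on_tail {Ω : Type*} [MeasurableSpace Ω]
    (μ : Measure Ω) [IsProbabilityMeasure μ]
    (p : ℝ) (hp : 1 ≤ p) (X : Ω → ℝ) (hX : MemLp X (ENNReal.ofReal p) μ)
    (M : ℝ) (hM : essSup (fun ω => (X ω : EReal)) μ = (M : EReal))
    (hP : 0 < (μ {ω | X ω = M}).toReal) :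
    ∀ l : ℝ, 1 - (μ {ω | X ω = M}).toReal ^ (1 / p) ≤ l → l < 1 →
      cvarLp (ENNReal.ofReal p) μ X l = M := by
  intro l hl hl1
  have hp0 : (0:ℝ) < p := lt_of_lt_of_le one_pos hp
  set q := ENNReal.ofReal p with hq
  have hq0 : q ≠ 0 := by
    simp only [hq, Ne, ENNReal.ofReal_eq_zero, not_le]; exact hp0
  have hqt : q ≠ ∞ := ENNReal.ofReal_ne_top
  have hqr : q.toReal = p := ENNReal.toReal_ofReal hp0.le
  have h1l : 0 < 1 - l := by linarith
  set S := {ω | X ω = M} with hSdef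
  set P := (μ S).toReal with hPdef
  have hPl : 1 - l ≤ P ^ (1/p) := by linarith
  have haX : ∀ᵐ ω ∂μ, X ω ≤ M := by
    have h := ae_le_essSup (μ := μ) (f := fun ω => (X ω : EReal))
    rw [hM] at h
    filter_upwards [h] with ω hω using EReal.coe_le_coe_iff.mp hω
  have hg : ∀ c : ℝ, MemLp (fun ω => max (X ω - c) 0) q μ := fun c =>
    (hX.sub (memLp_const c)).pos_part
  have hlow : ∀ c : ℝ,
      M ≤ (1 - l)⁻¹ * (eLpNorm (fun ω => max (X ω - c) 0) q μ).toReal + c := by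
    intro c
    by_cases hc : M ≤ c
    · have h0 : 0 ≤ (1 - l)⁻¹ * (eLpNorm (fun ω => max (X ω - c) 0) q μ).toReal :=
        mul_nonneg (by positivity) ENNReal.toReal_nonneg
      linarith
    push_neg at hc
    set g := fun ω => max (X ω - c) 0 with hgdef
    set N := eLpNorm g q μ with hNdef
    have hNt : N ≠ ∞ := (hg c).2.ne
    have hε : (0:ℝ) < M - c := by linarith
    set ε := ENNReal.ofReal (M - c) with hεdef
    have hε0 : ε ≠ 0 := by
      simp only [hεdef, Ne, ENNReal.ofReal_eq_zero, not_le]; exact hε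
    have hεt : ε ≠ ∞ := ENNReal.ofReal_ne_top
    have hsub : S ⊆ {ω | ε ≤ (‖g ω‖₊ : ℝ≥0∞)} := by
      intro ω hω
      have hgω : g ω = M - c := by
        simp only [hgdef]
        rw [Set.mem_setOf_eq] at hω
        rw [hω, max_eq_left hε.le]
      have : (‖g ω‖₊ : ℝ≥0∞) = ENNReal.ofReal (M - c) := by
        rw [show (‖g ω‖₊ : ℝ≥0∞) = ENNReal.ofReal ‖g ω‖ from (ofReal_norm (g ω)).symm, hgω, Real.norm_of_nonneg hε.le]
      rw [Set.mem_setOf_eq, this]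
    have hmeas := meas_ge_le_mul_pow_eLpNorm_enorm μ hq0 hqt (hg c).1 hε0 (fun h => absurd h hεt)
    have hmono : μ S ≤ ε⁻¹ ^ p * N ^ p := by
      calc μ S ≤ μ {ω | ε ≤ (‖g ω‖₊ : ℝ≥0∞)} := measure_mono hsub
        _ ≤ ε⁻¹ ^ q.toReal * eLpNorm g q μ ^ q.toReal := hmeas
        _ = ε⁻¹ ^ p * N ^ p := by rw [hqr]
    have hkey : ε * (μ S) ^ (1/p) ≤ N := by
      have hεp0 : ε ^ p ≠ 0 :=
        (ENNReal.rpow_pos (lt_of_le_of_ne bot_le (Ne.symm hε0)) hεt).ne'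
      have hεpt : ε ^ p ≠ ∞ := ENNReal.rpow_ne_top_of_nonneg hp0.le hεt
      have h1 : ε ^ p * μ S ≤ N ^ p := by
        rw [ENNReal.inv_rpow] at hmono
        calc ε ^ p * μ S ≤ ε ^ p * ((ε ^ p)⁻¹ * N ^ p) := mul_le_mul_right hmono _
          _ = N ^ p := by rw [← mul_assoc, ENNReal.mul_inv_cancel hεp0 hεpt, one_mul]
      have h2 := ENNReal.rpow_le_rpow h1 (by positivity : (0:ℝ) ≤ 1/p)
      rwa [ENNReal.mul_rpow_of_nonneg _ _ (by positivity : (0:ℝ) ≤ 1/p),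
        ← ENNReal.rpow_mul, mul_one_div, div_self hp0.ne', ENNReal.rpow_one,
        ← ENNReal.rpow_mul, mul_one_div, div_self hp0.ne', ENNReal.rpow_one] at h2
    have hkeyR : (M - c) * P ^ (1/p) ≤ N.toReal := by
      have := ENNReal.toReal_mono hNt hkey
      rwa [ENNReal.toReal_mul, hεdef, ENNReal.toReal_ofReal hε.le,
        ← ENNReal.toReal_rpow] at this
    have hstep : M - c ≤ (1 - l)⁻¹ * N.toReal := by
      have h1 : (M - c) * (1 - l) ≤ (M - c) * P ^ (1/p) :=
        mul_le_mul_of_nonneg_left hPl hε.le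
      have h2 : (M - c) * (1 - l) ≤ N.toReal := le_trans h1 hkeyR
      calc M - c = (1 - l)⁻¹ * ((M - c) * (1 - l)) := by field_simp
        _ ≤ (1 - l)⁻¹ * N.toReal := mul_le_mul_of_nonneg_left h2 (by positivity)
    linarith
  have hupper : eLpNorm (fun ω => max (X ω - M) 0) q μ = 0 := by
    have hzero : (fun ω => max (X ω - M) 0) =ᵐ[μ] (fun _ => (0:ℝ)) := by
      filter_upwards [haX] with ω hω
      simp [max_eq_right (by linarith : X ω - M ≤ 0)]
    rw [eLpNorm_congr_ae hzero, eLpNorm_zero']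
  have hFM : (1 - l)⁻¹ * (eLpNorm (fun ω => max (X ω - M) 0) q μ).toReal + M = M := by
    rw [hupper]; simp
  refine le_antisymm ?_ ?_
  · calc cvarLp q μ X l ≤ (1 - l)⁻¹ * (eLpNorm (fun ω => max (X ω - M) 0) q μ).toReal + M :=
        ciInf_le ⟨M, fun x ⟨c, hc⟩ => hc ▸ hlow c⟩ M
      _ = M := hFM
  · exact le_ciInf hlow
end

section
/- If esssup X = x and P(X = x) = P > 0, then inf_{c ≥ 0} ‖(c(X-x)+1)_+‖_p = P^{1/p}, with ‖(c(X-x)+1)_+‖_p → P^{1/p} as c → +∞; and if esssup X < x, the infimum is 0. -/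
open MeasureTheory ENNReal Filter

/-- If `esssup X = x` with `P := P(X = x) > 0`, then
`inf_{c ≥ 0} ‖(c(X-x)+1)_+‖_p = P^{1/p}` and `‖(c(X-x)+1)_+‖_p → P^{1/p}` as
`c → ∞`; and if `esssup X < x`, the infimum is `0`. -/
theorem bufferedProb_at_esssup {Ω : Type*} [MeasurableSpace Ω]
    (μ : Measure Ω) [IsProbabilityMeasure μ]
    (p : ℝ) (hp : 1 ≤ p) (X : Ω → ℝ) (hX : MemLp X (ENNReal.ofReal p) μ) (x : ℝ) :
    (essSup (fun ω => (X ω : EReal)) μ = (x : EReal) → 0 < μ {ω | X ω = x} →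
      ((⨅ c ∈ Set.Ici (0 : ℝ),
          eLpNorm (fun ω => max (c * (X ω - x) + 1) 0) (ENNReal.ofReal p) μ) =
        μ {ω | X ω = x} ^ (1 / p) ∧
      Tendsto
        (fun c : ℝ =>
          eLpNorm (fun ω => max (c * (X ω - x) + 1) 0) (ENNReal.ofReal p) μ)
        atTop (nhds (μ {ω | X ω = x} ^ (1 / p))))) ∧
    (essSup (fun ω => (X ω : EReal)) μ < (x : EReal) →
      (⨅ c ∈ Set.Ici (0 : ℝ),
        eLpNorm (fun ω => max (c * (X ω - x) + 1) 0) (ENNReal.ofReal p) μ) = 0) := by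
  obtain ⟨g, hg_sm, hXg⟩ := hX.aestronglyMeasurable
  have hgm : Measurable g := hg_sm.measurable
  have hp0 : (0:ℝ) < p := lt_of_lt_of_le one_pos hp
  set q : ℝ≥0∞ := ENNReal.ofReal p with hqdef
  have hq0 : q ≠ 0 := by
    simp only [hqdef, Ne, ENNReal.ofReal_eq_zero, not_le]
    exact hp0
  have hqt : q ≠ ∞ := ENNReal.ofReal_ne_top
  have hqr : q.toReal = p := ENNReal.toReal_ofReal hp0.le
  have hcong : ∀ c : ℝ,
      eLpNorm (fun ω => max (c * (X ω - x) + 1) 0) q μ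
        = eLpNorm (fun ω => max (c * (g ω - x) + 1) 0) q μ :=
    fun c => eLpNorm_congr_ae (hXg.mono fun ω h => by simp only [h])
  have hset : μ {ω | X ω = x} = μ {ω | g ω = x} := by
    refine measure_congr ?_
    filter_upwards [hXg] with ω h
    show (X ω = x) = (g ω = x)
    rw [h]
  have hsm : MeasurableSet {ω | g ω = x} := hgm (measurableSet_singleton x)
  constructor
  · intro hess _
    have hgle : ∀ᵐ ω ∂μ, g ω ≤ x := by
      have h1 : ∀ᵐ ω ∂μ, (X ω : EReal) ≤ (x : EReal) := by
        rw [← hess]; exact ae_le_essSup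
      filter_upwards [h1, hXg] with ω h h2
      rw [← h2]; exact_mod_cast h
    -- lower bound for each c ≥ 0
    have hlow : ∀ c ∈ Set.Ici (0:ℝ),
        μ {ω | g ω = x} ^ (1/p)
          ≤ eLpNorm (fun ω => max (c * (g ω - x) + 1) 0) q μ := by
      intro c _
      have hind : eLpNorm ({ω | g ω = x}.indicator (fun _ => (1:ℝ))) q μ
          = μ {ω | g ω = x} ^ (1/p) := by
        rw [eLpNorm_indicator_const hsm hq0 hqt, hqr]
        simp
      rw [← hind]
      refine eLpNorm_mono fun ω => ?_
      by_cases h : g ω = x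
      · have hi : ({ω | g ω = x}.indicator (fun _ => (1:ℝ))) ω = 1 := by
          simp [Set.indicator_apply, Set.mem_setOf_eq, h]
        rw [hi, h]
        simp
      · have hi : ({ω | g ω = x}.indicator (fun _ => (1:ℝ))) ω = 0 := by
          simp [Set.indicator_apply, Set.mem_setOf_eq, h]
        rw [hi]
        simp [abs_nonneg, le_max_right]
    -- convergence of lintegrals
    have hlim : Tendsto
        (fun c : ℝ => ∫⁻ ω, (‖max (c * (g ω - x) + 1) 0‖₊ : ℝ≥0∞) ^ p ∂μ)
        atTop (nhds (μ {ω | g ω = x})) := by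
      have h0 : (∫⁻ ω, ({ω | g ω = x}.indicator (fun _ => (1:ℝ≥0∞))) ω ∂μ)
          = μ {ω | g ω = x} := by
        rw [lintegral_indicator hsm]
        simp
      rw [← h0]
      refine tendsto_lintegral_filter_of_dominated_convergence
        (fun _ => (1:ℝ≥0∞)) ?_ ?_ ?_ ?_
      · refine Eventually.of_forall fun c => ?_
        have : Measurable fun ω => max (c * (g ω - x) + 1) 0 :=
          ((hgm.sub measurable_const).const_mul c).add_const 1 |>.max measurable_const
        exact (this.nnnorm.coe_nnreal_ennreal).pow_const p
      · filter_upwards [eventually_ge_atTop (0:ℝ)] with c hc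
        filter_upwards [hgle] with ω hω
        have h1 : max (c * (g ω - x) + 1) 0 ≤ 1 := by
          have : c * (g ω - x) ≤ 0 := mul_nonpos_of_nonneg_of_nonpos hc (by linarith)
          have h2 : c * (g ω - x) + 1 ≤ 1 := by linarith
          exact max_le h2 zero_le_one
        have h1' : ‖max (c * (g ω - x) + 1) 0‖ ≤ 1 := by
          rw [Real.norm_eq_abs, abs_of_nonneg (le_max_right _ _)]
          exact h1
        have h2 : (‖max (c * (g ω - x) + 1) 0‖₊ : ℝ≥0∞) ≤ 1 := by
          rw [← ENNReal.coe_one, ENNReal.coe_le_coe, ← NNReal.coe_le_coe,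
            coe_nnnorm, NNReal.coe_one]
          exact h1'
        calc (‖max (c * (g ω - x) + 1) 0‖₊ : ℝ≥0∞) ^ p
            ≤ (1:ℝ≥0∞) ^ p := ENNReal.rpow_le_rpow h2 hp0.le
          _ = 1 := ENNReal.one_rpow p
      · simp
      · filter_upwards [hgle] with ω hω
        by_cases h : g ω = x
        · have hval : ∀ c : ℝ, (‖max (c * (g ω - x) + 1) 0‖₊ : ℝ≥0∞) ^ p = 1 := by
            intro c
            rw [h]
            simp [ENNReal.one_rpow]
          simp only [hval]
          have hi : ({ω | g ω = x}.indicator (fun _ => (1:ℝ≥0∞))) ω = 1 := by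
            simp [Set.indicator_apply, Set.mem_setOf_eq, h]
          rw [hi]
          exact tendsto_const_nhds
        · have hlt : g ω < x := lt_of_le_of_ne hω h
          have hz : ({ω | g ω = x}.indicator (fun _ => (1:ℝ≥0∞))) ω = 0 := by
            simp [Set.indicator_apply, Set.mem_setOf_eq, h]
          rw [hz]
          refine Tendsto.congr' ?_ tendsto_const_nhds
          filter_upwards [eventually_ge_atTop ((x - g ω)⁻¹)] with c hc
          have hx0 : 0 < x - g ω := by linarith
          have : c * (g ω - x) + 1 ≤ 0 := by
            have h3 : 1 ≤ c * (x - g ω) := by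
              rw [← inv_mul_cancel₀ hx0.ne']
              exact mul_le_mul_of_nonneg_right hc hx0.le
            nlinarith
          have hm : max (c * (g ω - x) + 1) 0 = 0 := max_eq_right this
          rw [hm]
          simp [ENNReal.zero_rpow_of_pos hp0]
    -- convergence of eLpNorms (for g)
    have htg : Tendsto
        (fun c : ℝ => eLpNorm (fun ω => max (c * (g ω - x) + 1) 0) q μ)
        atTop (nhds (μ {ω | g ω = x} ^ (1/p))) := by
      have hcont := (ENNReal.continuous_rpow_const (y := 1/p)).tendsto (μ {ω | g ω = x})
      have := hcont.comp hlim
      refine this.congr fun c => ?_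
      rw [Function.comp_apply, eLpNorm_eq_lintegral_rpow_enorm_toReal hq0 hqt, hqr]
      rfl
    have htX : Tendsto
        (fun c : ℝ => eLpNorm (fun ω => max (c * (X ω - x) + 1) 0) q μ)
        atTop (nhds (μ {ω | X ω = x} ^ (1/p))) := by
      rw [hset]
      exact htg.congr fun c => (hcong c).symm
    refine ⟨?_, htX⟩
    rw [hset]
    simp_rw [hcong]
    refine le_antisymm ?_ (le_iInf₂ hlow)
    refine ge_of_tendsto htg ?_
    filter_upwards [eventually_ge_atTop (0:ℝ)] with c hc
    exact biInf_le _ hc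
  · intro hlt
    obtain ⟨z, hz1, hz2⟩ := exists_between hlt
    lift z to ℝ using ⟨(hz2.trans (EReal.coe_lt_top x)).ne,
      ((bot_le (a := essSup (fun ω => (X ω : EReal)) μ)).trans_lt hz1).ne'⟩
    have hzx : z < x := by exact_mod_cast hz2
    have hae : ∀ᵐ ω ∂μ, X ω < z := by
      have := ae_lt_of_essSup_lt hz1
      filter_upwards [this] with ω h
      exact_mod_cast h
    set c₀ : ℝ := (x - z)⁻¹ with hc₀def
    have hx0 : 0 < x - z := by linarith
    have hc₀ : (0:ℝ) ≤ c₀ := (inv_pos.mpr hx0).le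
    have hzero : eLpNorm (fun ω => max (c₀ * (X ω - x) + 1) 0) q μ = 0 := by
      have : (fun ω => max (c₀ * (X ω - x) + 1) 0) =ᵐ[μ] (fun _ => (0:ℝ)) := by
        filter_upwards [hae] with ω h
        have h3 : c₀ * (X ω - x) + 1 ≤ 0 := by
          have h4 : c₀ * (x - X ω) ≥ c₀ * (x - z) := by
            apply mul_le_mul_of_nonneg_left _ hc₀
            linarith
          rw [hc₀def] at h4 ⊢
          rw [inv_mul_cancel₀ hx0.ne'] at h4
          nlinarith [inv_pos.mpr hx0]
        exact max_eq_right h3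
      rw [eLpNorm_congr_ae this, eLpNorm_zero']
    have hle : (⨅ c ∈ Set.Ici (0 : ℝ),
        eLpNorm (fun ω => max (c * (X ω - x) + 1) 0) q μ) ≤ 0 := by
      refine le_trans (biInf_le _ (Set.mem_Ici.mpr hc₀)) hzero.le
    exact le_antisymm hle (zero_le')
end
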